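/- For all natural numbers a, b, c, the number of triples of functions (f, g, h), with f : Fin (2a) → Fin 3, g : Fin (2b) → Fin 3, h : Fin (2c) → Fin 3, satisfying the three parity conditions #{j : g j = 2} ≡ #{k : h k = 1} (mod 2), #{k : h k = 2} ≡ #{i : f i = 1} (mod 2), and #{i : f i = 2} ≡ #{j : g j = 1} (mod 2), equals (9^{a+b+c} + 9^a + 9^b + 9^c + 4)/8; that is, 8 times this count equals 9^{a+b+c} + 9^a + 9^b + 9^c + 4. (This is the dimension of the joint +1 eigenspace of the three net operators Ψ^x, Ψ^y, Ψ^z in the block B_{000}, computed as D^{++}D^{++}D^{++} + cyclic sums of D^{−+}D^{+−}D^{++} and D^{+−}D^{−+}D^{−−} + D^{−−}D^{−−}D^{−−}.) -/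

import Mathlib

open Finset

/-- number of `f : Fin n → Fin 3` whose count of 1's has parity `s` and 2's parity `t` -/
def cnt (n s t : ℕ) : ℕ :=
  Fintype.card {f : Fin n → Fin 3 //
    (Finset.univ.filter (fun i => f i = 1)).card % 2 = s ∧
    (Finset.univ.filter (fun i => f i = 2)).card % 2 = t}

lemma count_cons (n : ℕ) (x : Fin 3) (g : Fin n → Fin 3) (v : Fin 3) :
    (Finset.univ.filter (fun i => (Fin.cons x g : Fin (n+1) → Fin 3) i = v)).card
      = (if x = v then 1 else 0) + (Finset.univ.filter (fun i => g i = v)).card := by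
  rw [Finset.card_filter, Finset.card_filter, Fin.sum_univ_succ]
  simp

lemma card_succ (n : ℕ) (P : (Fin (n + 1) → Fin 3) → Prop) [DecidablePred P] :
    Fintype.card {f // P f}
      = ∑ x : Fin 3, Fintype.card {g : Fin n → Fin 3 // P (Fin.cons x g)} := by
  rw [← Fintype.card_sigma]
  exact Fintype.card_congr
    ((Equiv.subtypeEquiv (Fin.consEquiv (fun _ => Fin 3)).symm (fun f => by
        simp [Fin.consEquiv])).trans
      (Equiv.subtypeProdEquivSigmaSubtype (fun x g => P (Fin.cons x g))))

lemma cnt_succ (n s t : ℕ) (hs : s < 2) (ht : t < 2) :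
    cnt (n + 1) s t = cnt n s t + cnt n (1 - s) t + cnt n s (1 - t) := by
  rw [cnt, card_succ, Fin.sum_univ_three, cnt, cnt, cnt]
  congr 1
  · congr 1
    · exact Fintype.card_congr (Equiv.subtypeEquivRight fun g => by
        simp [count_cons])
    · exact Fintype.card_congr (Equiv.subtypeEquivRight fun g => by
        simp [count_cons]
        omega)
  · exact Fintype.card_congr (Equiv.subtypeEquivRight fun g => by
      simp [count_cons]
      omega)

lemma cnt_zero : cnt 0 0 0 = 1 ∧ cnt 0 0 1 = 0 ∧ cnt 0 1 0 = 0 ∧ cnt 0 1 1 = 0 := by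
  refine ⟨?_, ?_, ?_, ?_⟩ <;>
    · rw [cnt]
      simp [Finset.filter_eq_empty_iff, Fintype.card_subtype]

lemma cnt_closed (n : ℕ) :
    (4 * cnt n 0 0 : ℤ) = 3 ^ n + 2 + (-1) ^ n ∧
    (4 * cnt n 0 1 : ℤ) = 3 ^ n - (-1) ^ n ∧
    (4 * cnt n 1 0 : ℤ) = 3 ^ n - (-1) ^ n ∧
    (4 * cnt n 1 1 : ℤ) = 3 ^ n - 2 + (-1) ^ n := by
  induction n with
  | zero => simp [cnt_zero.1, cnt_zero.2.1, cnt_zero.2.2.1, cnt_zero.2.2.2]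
  | succ n ih =>
    obtain ⟨h1, h2, h3, h4⟩ := ih
    rw [cnt_succ n 0 0 (by norm_num) (by norm_num),
        cnt_succ n 0 1 (by norm_num) (by norm_num),
        cnt_succ n 1 0 (by norm_num) (by norm_num),
        cnt_succ n 1 1 (by norm_num) (by norm_num)]
    have hm : ((-1:ℤ)) ^ (n+1) = -(-1) ^ n := by ring
    have h3p : ((3:ℤ)) ^ (n+1) = 3 * 3 ^ n := by ring
    refine ⟨?_, ?_, ?_, ?_⟩ <;> push_cast <;> linarith

lemma card_fibers (a b c : ℕ) :
    Fintype.card {fgh : (Fin (2 * a) → Fin 3) × (Fin (2 * b) → Fin 3) ×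
          (Fin (2 * c) → Fin 3) //
        (Finset.univ.filter (fun j => fgh.2.1 j = 2)).card % 2
          = (Finset.univ.filter (fun k => fgh.2.2 k = 1)).card % 2 ∧
        (Finset.univ.filter (fun k => fgh.2.2 k = 2)).card % 2
          = (Finset.univ.filter (fun i => fgh.1 i = 1)).card % 2 ∧
        (Finset.univ.filter (fun i => fgh.1 i = 2)).card % 2
          = (Finset.univ.filter (fun j => fgh.2.1 j = 1)).card % 2}
      = ∑ v ∈ (({0,1} : Finset ℕ) ×ˢ (({0,1} : Finset ℕ) ×ˢ ({0,1} : Finset ℕ))),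
          cnt (2*a) v.1 v.2.1 * cnt (2*b) v.2.1 v.2.2 * cnt (2*c) v.2.2 v.1 := by
  classical
  rw [Fintype.card_subtype]
  rw [Finset.card_eq_sum_card_fiberwise
    (f := fun x : (Fin (2 * a) → Fin 3) × (Fin (2 * b) → Fin 3) × (Fin (2 * c) → Fin 3) =>
      ((Finset.univ.filter (fun i => x.1 i = 1)).card % 2,
       (Finset.univ.filter (fun j => x.2.1 j = 1)).card % 2,
       (Finset.univ.filter (fun k => x.2.2 k = 1)).card % 2))
    (t := (({0,1} : Finset ℕ) ×ˢ (({0,1} : Finset ℕ) ×ˢ ({0,1} : Finset ℕ))))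
    (fun x _ => by
      simp only [Finset.mem_coe, Finset.mem_product, Finset.mem_insert, Finset.mem_singleton]
      omega)]
  refine Finset.sum_congr rfl (fun v _ => ?_)
  obtain ⟨p, q, u⟩ := v
  rw [Finset.filter_filter]
  have : (Finset.univ.filter (fun x : (Fin (2 * a) → Fin 3) × (Fin (2 * b) → Fin 3) ×
      (Fin (2 * c) → Fin 3) =>
      ((Finset.univ.filter (fun j => x.2.1 j = 2)).card % 2
          = (Finset.univ.filter (fun k => x.2.2 k = 1)).card % 2 ∧
        (Finset.univ.filter (fun k => x.2.2 k = 2)).card % 2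
          = (Finset.univ.filter (fun i => x.1 i = 1)).card % 2 ∧
        (Finset.univ.filter (fun i => x.1 i = 2)).card % 2
          = (Finset.univ.filter (fun j => x.2.1 j = 1)).card % 2) ∧
      ((Finset.univ.filter (fun i => x.1 i = 1)).card % 2,
       (Finset.univ.filter (fun j => x.2.1 j = 1)).card % 2,
       (Finset.univ.filter (fun k => x.2.2 k = 1)).card % 2) = (p, q, u)))
    = Finset.univ.filter (fun x : (Fin (2 * a) → Fin 3) × (Fin (2 * b) → Fin 3) ×
      (Fin (2 * c) → Fin 3) =>
      ((Finset.univ.filter (fun i => x.1 i = 1)).card % 2 = p ∧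
        (Finset.univ.filter (fun i => x.1 i = 2)).card % 2 = q) ∧
      (((Finset.univ.filter (fun j => x.2.1 j = 1)).card % 2 = q ∧
        (Finset.univ.filter (fun j => x.2.1 j = 2)).card % 2 = u) ∧
       ((Finset.univ.filter (fun k => x.2.2 k = 1)).card % 2 = u ∧
        (Finset.univ.filter (fun k => x.2.2 k = 2)).card % 2 = p))) := by
    refine Finset.filter_congr (fun x _ => ?_)
    simp only [Prod.mk.injEq]
    omega
  rw [this, ← Fintype.card_subtype, cnt, cnt, cnt, mul_assoc, ← Fintype.card_prod,
    ← Fintype.card_prod]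
  exact Fintype.card_congr ((Equiv.subtypeProdEquivProd
      (p := fun f : Fin (2*a) → Fin 3 =>
        (Finset.univ.filter (fun i => f i = 1)).card % 2 = p ∧
        (Finset.univ.filter (fun i => f i = 2)).card % 2 = q)
      (q := fun y : (Fin (2*b) → Fin 3) × (Fin (2*c) → Fin 3) =>
        ((Finset.univ.filter (fun j => y.1 j = 1)).card % 2 = q ∧
         (Finset.univ.filter (fun j => y.1 j = 2)).card % 2 = u) ∧
        ((Finset.univ.filter (fun k => y.2 k = 1)).card % 2 = u ∧
         (Finset.univ.filter (fun k => y.2 k = 2)).card % 2 = p))).trans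
    (Equiv.prodCongr (Equiv.refl _) (Equiv.subtypeProdEquivProd
      (p := fun g : Fin (2*b) → Fin 3 =>
        (Finset.univ.filter (fun j => g j = 1)).card % 2 = q ∧
        (Finset.univ.filter (fun j => g j = 2)).card % 2 = u)
      (q := fun h : Fin (2*c) → Fin 3 =>
        (Finset.univ.filter (fun k => h k = 1)).card % 2 = u ∧
        (Finset.univ.filter (fun k => h k = 2)).card % 2 = p))))



/-- The number of triples of functions
`f : Fin (2a) → Fin 3`, `g : Fin (2b) → Fin 3`, `h : Fin (2c) → Fin 3`
satisfying the three cyclic parity conditions equals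
`(9^{a+b+c} + 9^a + 9^b + 9^c + 4)/8` (the dimension of the joint `+1` eigenspace
of the net operators `Ψ^x, Ψ^y, Ψ^z` in the block `B_{000}`). -/
theorem block000_eigenspace_dim (a b c : ℕ) :
    8 * Fintype.card {fgh : (Fin (2 * a) → Fin 3) × (Fin (2 * b) → Fin 3) ×
          (Fin (2 * c) → Fin 3) //
        (Finset.univ.filter (fun j => fgh.2.1 j = 2)).card % 2
          = (Finset.univ.filter (fun k => fgh.2.2 k = 1)).card % 2 ∧
        (Finset.univ.filter (fun k => fgh.2.2 k = 2)).card % 2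
          = (Finset.univ.filter (fun i => fgh.1 i = 1)).card % 2 ∧
        (Finset.univ.filter (fun i => fgh.1 i = 2)).card % 2
          = (Finset.univ.filter (fun j => fgh.2.1 j = 1)).card % 2}
      = 9 ^ (a + b + c) + 9 ^ a + 9 ^ b + 9 ^ c + 4 := by
  rw [card_fibers]
  rw [Finset.sum_product]
  simp only [Finset.sum_insert (by norm_num : (0:ℕ) ∉ ({1} : Finset ℕ)),
    Finset.sum_singleton, Finset.sum_product]
  have key : ∀ (n : ℕ), ((3:ℤ))^(2*n) = 9^n ∧ ((-1:ℤ))^(2*n) = 1 := fun n => by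
    constructor
    · rw [pow_mul]; norm_num
    · rw [pow_mul]; norm_num
  obtain ⟨ha00, ha01, ha10, ha11⟩ := cnt_closed (2*a)
  obtain ⟨hb00, hb01, hb10, hb11⟩ := cnt_closed (2*b)
  obtain ⟨hc00, hc01, hc10, hc11⟩ := cnt_closed (2*c)
  rw [(key a).1, (key a).2] at ha00 ha01 ha10 ha11
  rw [(key b).1, (key b).2] at hb00 hb01 hb10 hb11
  rw [(key c).1, (key c).2] at hc00 hc01 hc10 hc11
  have hpow : ((9:ℤ))^(a+b+c) = 9^a * 9^b * 9^c := by rw [pow_add, pow_add]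
  apply @Nat.cast_injective ℤ
  push_cast
  apply mul_left_cancel₀ (show (8:ℤ) ≠ 0 by norm_num)
  have t1 : (64:ℤ) * (((cnt (2*a) 0 0 : ℤ)) * ((cnt (2*b) 0 0 : ℤ)) * ((cnt (2*c) 0 0 : ℤ))) = ((9:ℤ)^a+3) * ((9:ℤ)^b+3) * ((9:ℤ)^c+3) := by
    calc (64:ℤ) * (((cnt (2*a) 0 0 : ℤ)) * ((cnt (2*b) 0 0 : ℤ)) * ((cnt (2*c) 0 0 : ℤ))) = (4 * ((cnt (2*a) 0 0 : ℤ))) * (4 * ((cnt (2*b) 0 0 : ℤ))) * (4 * ((cnt (2*c) 0 0 : ℤ))) := by ring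
    _ = ((9:ℤ)^a+3) * ((9:ℤ)^b+3) * ((9:ℤ)^c+3) := by rw [ha00, hb00, hc00]; ring
  have t2 : (64:ℤ) * (((cnt (2*a) 0 0 : ℤ)) * ((cnt (2*b) 0 1 : ℤ)) * ((cnt (2*c) 1 0 : ℤ))) = ((9:ℤ)^a+3) * ((9:ℤ)^b-1) * ((9:ℤ)^c-1) := by
    calc (64:ℤ) * (((cnt (2*a) 0 0 : ℤ)) * ((cnt (2*b) 0 1 : ℤ)) * ((cnt (2*c) 1 0 : ℤ))) = (4 * ((cnt (2*a) 0 0 : ℤ))) * (4 * ((cnt (2*b) 0 1 : ℤ))) * (4 * ((cnt (2*c) 1 0 : ℤ))) := by ring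
    _ = ((9:ℤ)^a+3) * ((9:ℤ)^b-1) * ((9:ℤ)^c-1) := by rw [ha00, hb01, hc10]; ring
  have t3 : (64:ℤ) * (((cnt (2*a) 0 1 : ℤ)) * ((cnt (2*b) 1 0 : ℤ)) * ((cnt (2*c) 0 0 : ℤ))) = ((9:ℤ)^a-1) * ((9:ℤ)^b-1) * ((9:ℤ)^c+3) := by
    calc (64:ℤ) * (((cnt (2*a) 0 1 : ℤ)) * ((cnt (2*b) 1 0 : ℤ)) * ((cnt (2*c) 0 0 : ℤ))) = (4 * ((cnt (2*a) 0 1 : ℤ))) * (4 * ((cnt (2*b) 1 0 : ℤ))) * (4 * ((cnt (2*c) 0 0 : ℤ))) := by ring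
    _ = ((9:ℤ)^a-1) * ((9:ℤ)^b-1) * ((9:ℤ)^c+3) := by rw [ha01, hb10, hc00]; ring
  have t4 : (64:ℤ) * (((cnt (2*a) 0 1 : ℤ)) * ((cnt (2*b) 1 1 : ℤ)) * ((cnt (2*c) 1 0 : ℤ))) = ((9:ℤ)^a-1) * ((9:ℤ)^b-1) * ((9:ℤ)^c-1) := by
    calc (64:ℤ) * (((cnt (2*a) 0 1 : ℤ)) * ((cnt (2*b) 1 1 : ℤ)) * ((cnt (2*c) 1 0 : ℤ))) = (4 * ((cnt (2*a) 0 1 : ℤ))) * (4 * ((cnt (2*b) 1 1 : ℤ))) * (4 * ((cnt (2*c) 1 0 : ℤ))) := by ring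
    _ = ((9:ℤ)^a-1) * ((9:ℤ)^b-1) * ((9:ℤ)^c-1) := by rw [ha01, hb11, hc10]; ring
  have t5 : (64:ℤ) * (((cnt (2*a) 1 0 : ℤ)) * ((cnt (2*b) 0 0 : ℤ)) * ((cnt (2*c) 0 1 : ℤ))) = ((9:ℤ)^a-1) * ((9:ℤ)^b+3) * ((9:ℤ)^c-1) := by
    calc (64:ℤ) * (((cnt (2*a) 1 0 : ℤ)) * ((cnt (2*b) 0 0 : ℤ)) * ((cnt (2*c) 0 1 : ℤ))) = (4 * ((cnt (2*a) 1 0 : ℤ))) * (4 * ((cnt (2*b) 0 0 : ℤ))) * (4 * ((cnt (2*c) 0 1 : ℤ))) := by ring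
    _ = ((9:ℤ)^a-1) * ((9:ℤ)^b+3) * ((9:ℤ)^c-1) := by rw [ha10, hb00, hc01]; ring
  have t6 : (64:ℤ) * (((cnt (2*a) 1 0 : ℤ)) * ((cnt (2*b) 0 1 : ℤ)) * ((cnt (2*c) 1 1 : ℤ))) = ((9:ℤ)^a-1) * ((9:ℤ)^b-1) * ((9:ℤ)^c-1) := by
    calc (64:ℤ) * (((cnt (2*a) 1 0 : ℤ)) * ((cnt (2*b) 0 1 : ℤ)) * ((cnt (2*c) 1 1 : ℤ))) = (4 * ((cnt (2*a) 1 0 : ℤ))) * (4 * ((cnt (2*b) 0 1 : ℤ))) * (4 * ((cnt (2*c) 1 1 : ℤ))) := by ring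
    _ = ((9:ℤ)^a-1) * ((9:ℤ)^b-1) * ((9:ℤ)^c-1) := by rw [ha10, hb01, hc11]; ring
  have t7 : (64:ℤ) * (((cnt (2*a) 1 1 : ℤ)) * ((cnt (2*b) 1 0 : ℤ)) * ((cnt (2*c) 0 1 : ℤ))) = ((9:ℤ)^a-1) * ((9:ℤ)^b-1) * ((9:ℤ)^c-1) := by
    calc (64:ℤ) * (((cnt (2*a) 1 1 : ℤ)) * ((cnt (2*b) 1 0 : ℤ)) * ((cnt (2*c) 0 1 : ℤ))) = (4 * ((cnt (2*a) 1 1 : ℤ))) * (4 * ((cnt (2*b) 1 0 : ℤ))) * (4 * ((cnt (2*c) 0 1 : ℤ))) := by ring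
    _ = ((9:ℤ)^a-1) * ((9:ℤ)^b-1) * ((9:ℤ)^c-1) := by rw [ha11, hb10, hc01]; ring
  have t8 : (64:ℤ) * (((cnt (2*a) 1 1 : ℤ)) * ((cnt (2*b) 1 1 : ℤ)) * ((cnt (2*c) 1 1 : ℤ))) = ((9:ℤ)^a-1) * ((9:ℤ)^b-1) * ((9:ℤ)^c-1) := by
    calc (64:ℤ) * (((cnt (2*a) 1 1 : ℤ)) * ((cnt (2*b) 1 1 : ℤ)) * ((cnt (2*c) 1 1 : ℤ))) = (4 * ((cnt (2*a) 1 1 : ℤ))) * (4 * ((cnt (2*b) 1 1 : ℤ))) * (4 * ((cnt (2*c) 1 1 : ℤ))) := by ring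
    _ = ((9:ℤ)^a-1) * ((9:ℤ)^b-1) * ((9:ℤ)^c-1) := by rw [ha11, hb11, hc11]; ring
  linear_combination t1 + t2 + t3 + t4 + t5 + t6 + t7 + t8 + 8 * hpow
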